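/- For any Ferrers board B with n columns of heights c_1 ≤ c_2 ≤ ... ≤ c_n ≤ n, the Garsia–Remmel factorization holds: Σ_{k=0}^n [x]_q [x-1]_q ⋯ [x-k+1]_q R_{n-k}(B;q) = Π_{i=1}^n [x + c_i - i + 1]_q, as an identity of polynomials in q^x (equivalently, valid for all nonnegative integers x). -/

import Mathlib

open Finset
open scoped Classical

noncomputable section

variable {R : Type*} [CommRing R]

/-- The q-integer `[m]_q = 1 + q + ... + q^{m-1}`. -/
def qint (q : R) (m : ℕ) : R := ∑ i ∈ Finset.range m, q ^ i

/-- The q-factorial `[m]_q!`. -/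
def qfact (q : R) (m : ℕ) : R := ∏ i ∈ Finset.range m, qint q (i + 1)

/-- A Ferrers board inside the `n × n` grid, given by column heights `c`:
square `(i,j)` (0-based row `i`, column `j`) belongs to the board iff `i < c j`. -/
def IsFerrers (n : ℕ) (c : Fin n → ℕ) : Prop := Monotone c ∧ ∀ j, c j ≤ n

/-- The squares of the Ferrers board with column heights `c`. -/
def boardSq (n : ℕ) (c : Fin n → ℕ) : Finset (Fin n × Fin n) :=
  Finset.univ.filter fun s => (s.1 : ℕ) < c s.2

/-- A set of rooks is non-attacking when no two share a row or a column. -/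
def NonAttacking {n : ℕ} (C : Finset (Fin n × Fin n)) : Prop :=
  ∀ r ∈ C, ∀ r' ∈ C, r ≠ r' → r.1 ≠ r'.1 ∧ r.2 ≠ r'.2

/-- Placements of `k` non-attacking rooks on the Ferrers board. -/
def placements (n : ℕ) (c : Fin n → ℕ) (k : ℕ) : Finset (Finset (Fin n × Fin n)) :=
  Finset.univ.filter fun C => C.card = k ∧ C ⊆ boardSq n c ∧ NonAttacking C

/-- `inv(C,B)`: the number of squares of the board that do not contain a rook and
are not above (smaller row index, same column) nor to the right of (same row,
larger column index) any rook of `C`. -/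
def rookInv (n : ℕ) (c : Fin n → ℕ) (C : Finset (Fin n × Fin n)) : ℕ :=
  ((boardSq n c).filter fun s => s ∉ C ∧ ∀ r ∈ C,
    ¬(r.2 = s.2 ∧ s.1 < r.1) ∧ ¬(r.1 = s.1 ∧ r.2 < s.2)).card

/-- The Garsia–Remmel q-rook polynomial `R_k(B;q)`. -/
def qRook (q : R) (n : ℕ) (c : Fin n → ℕ) (k : ℕ) : R :=
  ∑ C ∈ placements n c k, q ^ rookInv n c C

/-- The polynomial (in `x`) `∑_{j=0}^n [j]_q! R_{n-j}(B;q) ∏_{i=j+1}^n (x - q^i)`. -/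
def hitGen (q : R) (n : ℕ) (c : Fin n → ℕ) : Polynomial R :=
  ∑ j ∈ Finset.range (n + 1),
    Polynomial.C (qfact q j * qRook q n c (n - j)) *
      ∏ i ∈ Finset.Icc (j + 1) n, (Polynomial.X - Polynomial.C (q ^ i))

/-- The Garsia–Remmel q-hit polynomial `T_k(B;q)`, defined by
`∑_{j=0}^n [j]_q! R_{n-j}(B;q) ∏_{i=j+1}^n (x - q^i) = ∑_k T_k(B;q) x^k`. -/
def qHit (q : R) (n : ℕ) (c : Fin n → ℕ) (k : ℕ) : R := (hitGen q n c).coeff k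

/-- Placements of `n` non-attacking rooks on the full `n × n` grid with exactly
`k` rooks on the board. -/
def fullPlacements (n : ℕ) (c : Fin n → ℕ) (k : ℕ) : Finset (Finset (Fin n × Fin n)) :=
  Finset.univ.filter fun C => C.card = n ∧ NonAttacking C ∧ (C ∩ boardSq n c).card = k

end

/-- `[m]_q = (1 - q^m)/(1 - q)` for an integer `m`. -/
noncomputable def qbrk (q : ℚ) (m : ℤ) : ℚ := (1 - q ^ m) / (1 - q)


namespace GR
open Finset

def Board (M N : ℕ) (c : Fin N → ℕ) : Finset (Fin M × Fin N) :=
  Finset.univ.filter fun s => (s.1 : ℕ) < c s.2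
def NA {M N : ℕ} (C : Finset (Fin M × Fin N)) : Prop :=
  ∀ r ∈ C, ∀ r' ∈ C, r ≠ r' → r.1 ≠ r'.1 ∧ r.2 ≠ r'.2
noncomputable def Pl (M N : ℕ) (c : Fin N → ℕ) (k : ℕ) : Finset (Finset (Fin M × Fin N)) :=
  Finset.univ.filter fun C => C.card = k ∧ C ⊆ Board M N c ∧ NA C
noncomputable def Inv (M N : ℕ) (c : Fin N → ℕ) (C : Finset (Fin M × Fin N)) : ℕ :=
  ((Board M N c).filter fun s => s ∉ C ∧ ∀ r ∈ C,
    ¬(r.2 = s.2 ∧ s.1 < r.1) ∧ ¬(r.1 = s.1 ∧ r.2 < s.2)).card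
noncomputable def Rk (q : ℚ) (M N : ℕ) (c : Fin N → ℕ) (k : ℕ) : ℚ :=
  ∑ C ∈ Pl M N c k, q ^ Inv M N c C

variable {M N : ℕ}

lemma mem_Board {c : Fin N → ℕ} {s : Fin M × Fin N} :
    s ∈ Board M N c ↔ (s.1 : ℕ) < c s.2 := by simp [Board]

lemma mem_Pl {c : Fin N → ℕ} {k : ℕ} {C : Finset (Fin M × Fin N)} :
    C ∈ Pl M N c k ↔ C.card = k ∧ C ⊆ Board M N c ∧ NA C := by simp [Pl]

lemma NA.subset {C D : Finset (Fin M × Fin N)} (h : NA C) (hD : D ⊆ C) : NA D :=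
  fun r hr r' hr' hne => h r (hD hr) r' (hD hr') hne

/-- rows of a placement, as natural numbers -/
def nrows (C : Finset (Fin M × Fin N)) : Finset ℕ := C.image fun s => (s.1 : ℕ)

lemma card_nrows {C : Finset (Fin M × Fin N)} (h : NA C) : (nrows C).card = C.card := by
  apply Finset.card_image_of_injOn
  intro a ha b hb hab
  by_contra hne
  exact absurd (Fin.val_injective hab) (h a ha b hb hne).1

lemma mem_nrows {C : Finset (Fin M × Fin N)} {t : ℕ} :
    t ∈ nrows C ↔ ∃ s ∈ C, (s.1 : ℕ) = t := by simp [nrows]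

lemma nrows_subset_range {c : Fin N → ℕ} {m : ℕ} (hc : ∀ j, c j ≤ m)
    {C : Finset (Fin M × Fin N)} (hC : C ⊆ Board M N c) : nrows C ⊆ range m := by
  intro t ht
  obtain ⟨s, hs, rfl⟩ := mem_nrows.mp ht
  exact mem_range.mpr (lt_of_lt_of_le (mem_Board.mp (hC hs)) (hc s.2))

/-- cardinality bound: at most `m` rooks when all columns have height `≤ m` -/
lemma card_le_height {c : Fin N → ℕ} {m k : ℕ} (hc : ∀ j, c j ≤ m)
    {C : Finset (Fin M × Fin N)} (hC : C ∈ Pl M N c k) : k ≤ m := by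
  obtain ⟨hcard, hsub, hNA⟩ := mem_Pl.mp hC
  calc k = (nrows C).card := by rw [card_nrows hNA, hcard]
    _ ≤ (range m).card := Finset.card_le_card (nrows_subset_range hc hsub)
    _ = m := card_range m

lemma card_le_cols {c : Fin N → ℕ} {k : ℕ}
    {C : Finset (Fin M × Fin N)} (hC : C ∈ Pl M N c k) : k ≤ N := by
  obtain ⟨hcard, hsub, hNA⟩ := mem_Pl.mp hC
  have : (C.image Prod.snd).card = C.card := by
    apply Finset.card_image_of_injOn
    intro a ha b hb hab
    by_contra hne
    exact absurd hab (hNA a ha b hb hne).2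
  calc k = (C.image Prod.snd).card := by rw [this, hcard]
    _ ≤ (univ : Finset (Fin N)).card := Finset.card_le_card (subset_univ _)
    _ = N := by simp

lemma Rk_eq_zero_of_gt {q : ℚ} {c : Fin N → ℕ} {k : ℕ} (hk : N < k) :
    Rk q M N c k = 0 := by
  unfold Rk
  apply Finset.sum_eq_zero
  intro C hC
  exfalso
  exact absurd (card_le_cols hC) (not_le.mpr hk)

lemma Pl_zero (c : Fin N → ℕ) : Pl M N c 0 = {∅} := by
  ext C
  simp only [mem_Pl, Finset.mem_singleton, Finset.card_eq_zero]
  constructor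
  · exact fun h => h.1
  · rintro rfl
    exact ⟨rfl, by simp, fun r hr => absurd hr (Finset.notMem_empty r)⟩

lemma Inv_empty (c : Fin N → ℕ) : Inv M N c (∅ : Finset (Fin M × Fin N)) = (Board M N c).card := by
  unfold Inv
  rw [Finset.filter_true_of_mem]
  intro s _
  simp

lemma Rk_zero (q : ℚ) (c : Fin N → ℕ) : Rk q M N c 0 = q ^ (Board M N c).card := by
  unfold Rk
  rw [Pl_zero, Finset.sum_singleton, Inv_empty]

/-- counting Fin-filters via ℕ filters (instance-polymorphic) -/
lemma card_filter_val (p : ℕ → Prop) {D1 : DecidablePred fun r : Fin M => p r.val}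
    {D2 : DecidablePred p} :
    (@Finset.filter _ (fun r : Fin M => p r.val) D1 univ).card
      = (@Finset.filter _ p D2 (range M)).card := by
  refine Finset.card_bij (fun a _ => (a : ℕ)) ?_ ?_ ?_
  · intro a ha
    have ha' := (@Finset.mem_filter _ _ D1 _ _).mp ha
    exact (@Finset.mem_filter _ _ D2 _ _).mpr ⟨mem_range.mpr a.isLt, ha'.2⟩
  · intro a _ b _ h
    exact Fin.val_injective h
  · intro b hb
    have hb' := (@Finset.mem_filter _ _ D2 _ _).mp hb
    have hbM : b < M := mem_range.mp hb'.1
    exact ⟨⟨b, hbM⟩, (@Finset.mem_filter _ _ D1 _ _).mpr ⟨mem_univ _, hb'.2⟩, rfl⟩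

/-- the key single-column summation lemma -/
lemma sum_pow_gt (q : ℚ) (T : Finset ℕ) :
    ∑ r ∈ T, q ^ (T.filter fun t => r < t).card = ∑ t ∈ range T.card, q ^ t := by
  generalize hn : T.card = n
  induction n generalizing T with
  | zero =>
    rw [Finset.card_eq_zero] at hn
    simp [hn]
  | succ n IH =>
    have hne : T.Nonempty := by
      rw [← Finset.card_pos, hn]; omega
    set a := T.min' hne with ha
    have haT : a ∈ T := T.min'_mem hne
    have hT : T = insert a (T.erase a) := (Finset.insert_erase haT).symm
    have hcard : (T.erase a).card = n := by
      rw [Finset.card_erase_of_mem haT, hn]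
      omega
    have key : ∀ r ∈ T.erase a, (T.filter fun t => r < t) = ((T.erase a).filter fun t => r < t) := by
      intro r hr
      ext t
      simp only [Finset.mem_filter, Finset.mem_erase]
      constructor
      · rintro ⟨htT, hrt⟩
        refine ⟨⟨?_, htT⟩, hrt⟩
        rintro rfl
        exact absurd (T.min'_le r (Finset.mem_of_mem_erase hr)) (not_le.mpr hrt)
      · rintro ⟨⟨_, htT⟩, hrt⟩; exact ⟨htT, hrt⟩
    have hfa : (T.filter fun t => a < t).card = n := by
      have : T.filter (fun t => a < t) = T.erase a := by
        ext t
        simp only [Finset.mem_filter, Finset.mem_erase]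
        constructor
        · rintro ⟨htT, hat⟩; exact ⟨ne_of_gt hat, htT⟩
        · rintro ⟨hne', htT⟩
          exact ⟨htT, lt_of_le_of_ne (T.min'_le t htT) (Ne.symm hne')⟩
      rw [this, hcard]
    rw [hT, Finset.sum_insert (Finset.notMem_erase a T), ← hT, hfa]
    have : ∑ r ∈ T.erase a, q ^ (T.filter fun t => r < t).card
        = ∑ r ∈ T.erase a, q ^ ((T.erase a).filter fun t => r < t).card := by
      apply Finset.sum_congr rfl
      intro r hr
      rw [key r hr]
    rw [this, IH _ hcard, Finset.sum_range_succ]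
    ring

lemma qbrk_mul_add {q : ℚ} (hq0 : q ≠ 0) (hq1 : q ≠ 1) (a b : ℤ) :
    qbrk q a * q ^ b + qbrk q b = qbrk q (a + b) := by
  have h1 : (1 : ℚ) - q ≠ 0 := sub_ne_zero.mpr (Ne.symm hq1)
  unfold qbrk
  rw [div_mul_eq_mul_div, ← add_div]
  congr 1
  rw [zpow_add₀ hq0]
  ring

lemma qint_eq_qbrk {q : ℚ} (hq1 : q ≠ 1) (t : ℕ) :
    (∑ i ∈ range t, q ^ i) = qbrk q (t : ℤ) := by
  rw [geom_sum_eq hq1]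
  unfold qbrk
  rw [zpow_natCast]
  rw [div_eq_div_iff (sub_ne_zero.mpr hq1) (sub_ne_zero.mpr (Ne.symm hq1))]
  ring

end GR

namespace GR
variable {M N : ℕ}

/-- embedding of the first `N` columns into `N+1` columns -/
def ι (M N : ℕ) : Fin M × Fin N ↪ Fin M × Fin (N + 1) :=
  ⟨fun s => (s.1, s.2.castSucc), by
    rintro ⟨a, b⟩ ⟨a', b'⟩ h
    simp only [Prod.mk.injEq] at h
    exact Prod.ext h.1 (Fin.castSucc_injective _ h.2)⟩

@[simp] lemma ι_apply (s : Fin M × Fin N) : ι M N s = (s.1, s.2.castSucc) := rfl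

lemma lastEmb_inj (M N : ℕ) :
    Function.Injective (fun r : Fin M => ((r, Fin.last N) : Fin M × Fin (N + 1))) :=
  fun a b h => (Prod.ext_iff.mp h).1

/-- the last column of the `N+1`-column board, of height `m` -/
def lastCol (M N m : ℕ) : Finset (Fin M × Fin (N + 1)) :=
  (Finset.univ.filter fun r : Fin M => (r : ℕ) < m).map
    ⟨fun r => (r, Fin.last N), lastEmb_inj M N⟩

lemma mem_lastCol {m : ℕ} {s : Fin M × Fin (N + 1)} :
    s ∈ lastCol M N m ↔ (s.1 : ℕ) < m ∧ s.2 = Fin.last N := by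
  obtain ⟨r, j⟩ := s
  simp only [lastCol, Finset.mem_map, Finset.mem_filter, Finset.mem_univ, true_and,
    Function.Embedding.coeFn_mk, Prod.mk.injEq]
  constructor
  · rintro ⟨a, ha, rfl, rfl⟩; exact ⟨ha, rfl⟩
  · rintro ⟨ha, rfl⟩; exact ⟨r, by simp [ha]⟩

lemma mem_map_ι {C₀ : Finset (Fin M × Fin N)} {s : Fin M × Fin (N + 1)} :
    s ∈ C₀.map (ι M N) ↔ ∃ a ∈ C₀, (a.1, a.2.castSucc) = s := by
  simp [Finset.mem_map]

lemma snd_ne_last_of_mem_map {C₀ : Finset (Fin M × Fin N)} {s : Fin M × Fin (N + 1)}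
    (h : s ∈ C₀.map (ι M N)) : s.2 ≠ Fin.last N := by
  obtain ⟨a, _, rfl⟩ := mem_map_ι.mp h
  exact Fin.ne_of_lt (Fin.castSucc_lt_last a.2)

lemma Board_succ (c : Fin (N + 1) → ℕ) :
    Board M (N + 1) c
      = (Board M N (fun i => c i.castSucc)).map (ι M N) ∪ lastCol M N (c (Fin.last N)) := by
  ext s
  obtain ⟨r, j⟩ := s
  simp only [mem_Board, Finset.mem_union, mem_map_ι, mem_lastCol]
  rcases Fin.eq_castSucc_or_eq_last j with ⟨j', rfl⟩ | rfl
  · constructor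
    · intro h
      exact Or.inl ⟨(r, j'), h, rfl⟩
    · rintro (⟨⟨a, b⟩, ha, h⟩ | ⟨h, hlast⟩)
      · simp only [Prod.mk.injEq] at h
        obtain ⟨rfl, h2⟩ := h
        rw [← Fin.castSucc_injective _ h2]
        exact ha
      · exact absurd hlast (Fin.ne_of_lt (Fin.castSucc_lt_last j'))
  · constructor
    · intro h; exact Or.inr ⟨h, rfl⟩
    · rintro (⟨⟨a, b⟩, ha, h⟩ | ⟨h, _⟩)
      · exact absurd (Prod.ext_iff.mp h).2 (Fin.ne_of_lt (Fin.castSucc_lt_last b))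
      · exact h

lemma disjoint_map_lastCol (A : Finset (Fin M × Fin N)) (m : ℕ) :
    Disjoint (A.map (ι M N)) (lastCol M N m) := by
  rw [Finset.disjoint_left]
  intro s hs hs'
  exact snd_ne_last_of_mem_map hs (mem_lastCol.mp hs').2

lemma NA_map {C₀ : Finset (Fin M × Fin N)} (h : NA C₀) : NA (C₀.map (ι M N)) := by
  intro r hr r' hr' hne
  obtain ⟨a, ha, rfl⟩ := mem_map_ι.mp hr
  obtain ⟨b, hb, rfl⟩ := mem_map_ι.mp hr'
  have hab : a ≠ b := fun hab => hne (by rw [hab])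
  obtain ⟨h1, h2⟩ := h a ha b hb hab
  exact ⟨h1, fun hc => h2 (Fin.castSucc_injective _ hc)⟩

lemma NA_of_map {C₀ : Finset (Fin M × Fin N)} (h : NA (C₀.map (ι M N))) : NA C₀ := by
  intro r hr r' hr' hne
  have h1 : (r.1, r.2.castSucc) ∈ C₀.map (ι M N) := mem_map_ι.mpr ⟨r, hr, rfl⟩
  have h2 : (r'.1, r'.2.castSucc) ∈ C₀.map (ι M N) := mem_map_ι.mpr ⟨r', hr', rfl⟩
  have hne' : (r.1, r.2.castSucc) ≠ (r'.1, r'.2.castSucc) := by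
    intro hc
    obtain ⟨hc1, hc2⟩ := Prod.ext_iff.mp hc
    exact hne (Prod.ext hc1 (Fin.castSucc_injective _ hc2))
  obtain ⟨g1, g2⟩ := h _ h1 _ h2 hne'
  exact ⟨g1, fun hc => g2 (by simp only at g2 ⊢; rw [hc])⟩

end GR

namespace GR
variable {M N : ℕ}

lemma forall_mem_map' {α β : Type*} {f : α ↪ β} {s : Finset α} {p : β → Prop} :
    (∀ y ∈ s.map f, p y) ↔ ∀ x ∈ s, p (f x) := by
  constructor
  · intro h x hx; exact h _ (Finset.mem_map_of_mem _ hx)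
  · intro h y hy; obtain ⟨x, hx, rfl⟩ := Finset.mem_map.mp hy; exact h x hx

lemma range_filter_eq (m : ℕ) (hmM : m ≤ M) (S : Finset ℕ)
    {D : DecidablePred fun t => t < m ∧ t ∉ S} :
    (@Finset.filter _ (fun t => t < m ∧ t ∉ S) D (range M)) = range m \ S := by
  ext t
  simp only [Finset.mem_filter, mem_range, Finset.mem_sdiff]
  constructor
  · rintro ⟨_, h2, h3⟩; exact ⟨h2, h3⟩
  · rintro ⟨h1, h2⟩; exact ⟨lt_of_lt_of_le h1 hmM, h1, h2⟩

lemma range_filter_eq' (m : ℕ) (hmM : m ≤ M) (S : Finset ℕ) (a : ℕ)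
    {D : DecidablePred fun t => a < t ∧ t < m ∧ t ∉ S} :
    (@Finset.filter _ (fun t => a < t ∧ t < m ∧ t ∉ S) D (range M))
      = (range m \ S).filter fun t => a < t := by
  ext t
  simp only [Finset.mem_filter, mem_range, Finset.mem_sdiff]
  constructor
  · rintro ⟨_, h1, h2, h3⟩; exact ⟨⟨h2, h3⟩, h1⟩
  · rintro ⟨⟨h1, h2⟩, h3⟩; exact ⟨lt_of_lt_of_le h1 hmM, h3, h1, h2⟩

section Rec

variable {c : Fin (N + 1) → ℕ}

/-- Part a computation: the inv-predicate transfers along `ι` for mapped placements. -/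
lemma Inv_map {k : ℕ} (hmono : Monotone c) (hM : ∀ j, c j ≤ M)
    {C₀ : Finset (Fin M × Fin N)} (hC₀ : C₀ ∈ Pl M N (fun i => c i.castSucc) k) :
    Inv M (N + 1) c (C₀.map (ι M N))
      = Inv M N (fun i => c i.castSucc) C₀ + (c (Fin.last N) - k) := by
  classical
  obtain ⟨hcard, hsub, hNA⟩ := mem_Pl.mp hC₀
  unfold Inv
  rw [Board_succ, Finset.filter_union, Finset.card_union_of_disjoint
    (Finset.disjoint_filter_filter (disjoint_map_lastCol _ _))]
  congr 1
  · -- mapped part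
    rw [Finset.filter_map, Finset.card_map]
    congr 1
    apply Finset.filter_congr
    intro s _
    simp only [Function.comp_apply]
    constructor
    · rintro ⟨h1, h2⟩
      refine ⟨fun hs => h1 (Finset.mem_map_of_mem _ hs), ?_⟩
      intro a ha
      have := h2 (ι M N a) (Finset.mem_map_of_mem _ ha)
      simpa only [ι_apply, Fin.castSucc_inj, Fin.castSucc_lt_castSucc_iff] using this
    · rintro ⟨h1, h2⟩
      refine ⟨fun hs => h1 ((Finset.mem_map' _).mp hs), ?_⟩
      rw [forall_mem_map']
      intro a ha
      have := h2 a ha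
      simpa only [ι_apply, Fin.castSucc_inj, Fin.castSucc_lt_castSucc_iff] using this
  · -- last column part
    unfold lastCol
    rw [Finset.filter_map, Finset.card_map, Finset.filter_filter]
    simp only [Function.Embedding.coeFn_mk]
    have hpred : ∀ r : Fin M,
        ((r : ℕ) < c (Fin.last N) ∧
          ((r, Fin.last N) ∉ C₀.map (ι M N) ∧ ∀ x ∈ C₀.map (ι M N),
            ¬(x.2 = (r, Fin.last N).2 ∧ (r, Fin.last N).1 < x.1) ∧
            ¬(x.1 = (r, Fin.last N).1 ∧ x.2 < (r, Fin.last N).2)))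
        ↔ ((r : ℕ) < c (Fin.last N) ∧ (r : ℕ) ∉ nrows C₀) := by
      intro r
      rw [and_congr_right_iff]
      intro _
      constructor
      · rintro ⟨_, h2⟩ hmem
        obtain ⟨a, ha, hav⟩ := mem_nrows.mp hmem
        have := (h2 (ι M N a) (Finset.mem_map_of_mem _ ha)).2
        simp only [ι_apply] at this
        exact this ⟨Fin.val_injective hav, Fin.castSucc_lt_last a.2⟩
      · intro hmem
        refine ⟨fun hmm => snd_ne_last_of_mem_map hmm rfl, ?_⟩
        rw [forall_mem_map']
        intro a ha
        simp only [ι_apply]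
        constructor
        · rintro ⟨hc1, _⟩
          exact absurd hc1 (Fin.ne_of_lt (Fin.castSucc_lt_last a.2))
        · rintro ⟨hc1, _⟩
          exact hmem (mem_nrows.mpr ⟨a, ha, by rw [hc1]⟩)
    have hflt : (univ.filter fun r : Fin M => (r : ℕ) < c (Fin.last N) ∧
          (((fun s : Fin M × Fin (N+1) => s ∉ C₀.map (ι M N) ∧ ∀ x ∈ C₀.map (ι M N),
            ¬(x.2 = s.2 ∧ s.1 < x.1) ∧ ¬(x.1 = s.1 ∧ x.2 < s.2)) ∘
            (fun r : Fin M => ((r, Fin.last N) : Fin M × Fin (N+1)))) r))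
        = univ.filter fun r : Fin M =>
            ((r : ℕ) < c (Fin.last N) ∧ (r : ℕ) ∉ nrows C₀) := by
      apply Finset.filter_congr
      intro r _
      simp only [Function.comp_apply]
      exact hpred r
    rw [hflt]
    rw [card_filter_val (fun t => t < c (Fin.last N) ∧ t ∉ nrows C₀),
      range_filter_eq _ (hM _) _, Finset.card_sdiff_of_subset]
    · rw [card_range, card_nrows hNA, hcard]
    · exact nrows_subset_range (fun j => hmono (Fin.le_last _)) hsub
    · exact fun _ => Classical.propDecidable _

/-- Part b computation: inv of a placement with a rook in the last column. -/
lemma Inv_insert {k : ℕ} (hmono : Monotone c) (hM : ∀ j, c j ≤ M)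
    {C₀ : Finset (Fin M × Fin N)} (hC₀ : C₀ ∈ Pl M N (fun i => c i.castSucc) k)
    (r₀ : Fin M) (h1 : (r₀ : ℕ) < c (Fin.last N)) (h2 : (r₀ : ℕ) ∉ nrows C₀) :
    Inv M (N + 1) c (insert (r₀, Fin.last N) (C₀.map (ι M N)))
      = Inv M N (fun i => c i.castSucc) C₀
        + ((range (c (Fin.last N)) \ nrows C₀).filter fun t => (r₀ : ℕ) < t).card := by
  classical
  obtain ⟨hcard, hsub, hNA⟩ := mem_Pl.mp hC₀
  have hnotmem : ((r₀, Fin.last N) : Fin M × Fin (N + 1)) ∉ C₀.map (ι M N) :=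
    fun hmm => snd_ne_last_of_mem_map hmm rfl
  unfold Inv
  rw [Board_succ, Finset.filter_union, Finset.card_union_of_disjoint
    (Finset.disjoint_filter_filter (disjoint_map_lastCol _ _))]
  congr 1
  · -- mapped part: unaffected by the extra rook
    rw [Finset.filter_map, Finset.card_map]
    congr 1
    apply Finset.filter_congr
    intro s _
    simp only [Function.comp_apply]
    have hmem : ι M N s ∈ insert (r₀, Fin.last N) (C₀.map (ι M N)) ↔ s ∈ C₀ := by
      rw [Finset.mem_insert, Finset.mem_map']
      constructor
      · rintro (hc | h)
        · exact absurd (congrArg Prod.snd hc) (Fin.ne_of_lt (Fin.castSucc_lt_last s.2))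
        · exact h
      · exact fun h => Or.inr h
    constructor
    · rintro ⟨hm, hf⟩
      refine ⟨fun hs => hm (hmem.mpr hs), ?_⟩
      intro a ha
      have := hf (ι M N a) (Finset.mem_insert_of_mem (Finset.mem_map_of_mem _ ha))
      simpa only [ι_apply, Fin.castSucc_inj, Fin.castSucc_lt_castSucc_iff] using this
    · rintro ⟨hm, hf⟩
      refine ⟨fun hs => hm (hmem.mp hs), ?_⟩
      rw [Finset.forall_mem_insert]
      constructor
      · -- the last-column rook imposes no condition on earlier columns
        simp only [ι_apply]
        constructor
        · rintro ⟨hc1, _⟩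
          exact absurd hc1.symm (Fin.ne_of_lt (Fin.castSucc_lt_last s.2))
        · rintro ⟨_, hc2⟩
          exact absurd hc2 (Fin.not_lt.mpr (Fin.castSucc_lt_last s.2).le)
      · rw [forall_mem_map']
        intro a ha
        have := hf a ha
        simpa only [ι_apply, Fin.castSucc_inj, Fin.castSucc_lt_castSucc_iff] using this
  · -- last column part
    unfold lastCol
    rw [Finset.filter_map, Finset.card_map, Finset.filter_filter]
    simp only [Function.Embedding.coeFn_mk]
    have hpred : ∀ r : Fin M,
        ((r : ℕ) < c (Fin.last N) ∧
          ((r, Fin.last N) ∉ insert (r₀, Fin.last N) (C₀.map (ι M N)) ∧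
            ∀ x ∈ insert (r₀, Fin.last N) (C₀.map (ι M N)),
            ¬(x.2 = (r, Fin.last N).2 ∧ (r, Fin.last N).1 < x.1) ∧
            ¬(x.1 = (r, Fin.last N).1 ∧ x.2 < (r, Fin.last N).2)))
        ↔ ((r₀ : ℕ) < (r : ℕ) ∧ (r : ℕ) < c (Fin.last N) ∧ (r : ℕ) ∉ nrows C₀) := by
      intro r
      constructor
      · rintro ⟨hrm, hnm, hf⟩
        have hne : r ≠ r₀ := by
          intro hc
          exact hnm (by rw [hc]; exact Finset.mem_insert_self _ _)
        have hng := (hf (r₀, Fin.last N) (Finset.mem_insert_self _ _)).1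
        have hnlt : ¬ r < r₀ := fun hlt => hng ⟨rfl, hlt⟩
        refine ⟨?_, hrm, ?_⟩
        · have hle : (r₀ : ℕ) ≤ (r : ℕ) := Fin.le_def.mp (Fin.not_lt.mp hnlt)
          exact lt_of_le_of_ne hle (fun h => hne (Fin.val_injective h.symm))
        · intro hmem
          obtain ⟨a, ha, hav⟩ := mem_nrows.mp hmem
          have := (hf (ι M N a) (Finset.mem_insert_of_mem (Finset.mem_map_of_mem _ ha))).2
          simp only [ι_apply] at this
          exact this ⟨Fin.val_injective hav, Fin.castSucc_lt_last a.2⟩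
      · rintro ⟨hgt, hrm, hmem⟩
        have hne : r ≠ r₀ := by
          intro hc; subst hc; exact lt_irrefl _ hgt
        refine ⟨hrm, ?_, ?_⟩
        · rw [Finset.mem_insert]
          rintro (hc | hc)
          · exact hne (Prod.ext_iff.mp hc).1
          · exact snd_ne_last_of_mem_map hc rfl
        · rw [Finset.forall_mem_insert]
          constructor
          · constructor
            · rintro ⟨_, hlt⟩
              exact absurd hgt (Fin.not_lt.mpr hlt.le)
            · rintro ⟨hc, hlt⟩
              exact lt_irrefl _ hlt
          · rw [forall_mem_map']
            intro a ha
            simp only [ι_apply]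
            constructor
            · rintro ⟨hc1, _⟩
              exact absurd hc1 (Fin.ne_of_lt (Fin.castSucc_lt_last a.2))
            · rintro ⟨hc1, _⟩
              exact hmem (mem_nrows.mpr ⟨a, ha, by rw [hc1]⟩)
    have hflt : (univ.filter fun r : Fin M => (r : ℕ) < c (Fin.last N) ∧
          (((fun s : Fin M × Fin (N+1) => s ∉ insert (r₀, Fin.last N) (C₀.map (ι M N)) ∧
            ∀ x ∈ insert (r₀, Fin.last N) (C₀.map (ι M N)),
            ¬(x.2 = s.2 ∧ s.1 < x.1) ∧ ¬(x.1 = s.1 ∧ x.2 < s.2)) ∘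
            (fun r : Fin M => ((r, Fin.last N) : Fin M × Fin (N+1)))) r))
        = univ.filter fun r : Fin M =>
            ((r₀ : ℕ) < (r : ℕ) ∧ (r : ℕ) < c (Fin.last N) ∧ (r : ℕ) ∉ nrows C₀) := by
      apply Finset.filter_congr
      intro r _
      simp only [Function.comp_apply]
      exact hpred r
    rw [hflt]
    rw [card_filter_val (fun t => (r₀ : ℕ) < t ∧ t < c (Fin.last N) ∧ t ∉ nrows C₀),
      range_filter_eq' _ (hM _) _ _]
    exact fun _ => Classical.propDecidable _

end Rec
end GR

namespace GR
variable {M N : ℕ}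
section Rec2
variable {c : Fin (N + 1) → ℕ}

lemma insert_last_inj {C₁ C₂ : Finset (Fin M × Fin N)} {a₁ a₂ : Fin M}
    (h : insert (a₁, Fin.last N) (C₁.map (ι M N)) = insert (a₂, Fin.last N) (C₂.map (ι M N))) :
    a₁ = a₂ ∧ C₁ = C₂ := by
  have hne1 : ∀ a : Fin M, ((a, Fin.last N) : Fin M × Fin (N + 1)) ∉ C₁.map (ι M N) :=
    fun a hmm => snd_ne_last_of_mem_map hmm rfl
  have hne2 : ∀ a : Fin M, ((a, Fin.last N) : Fin M × Fin (N + 1)) ∉ C₂.map (ι M N) :=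
    fun a hmm => snd_ne_last_of_mem_map hmm rfl
  have hmem : ((a₁, Fin.last N) : Fin M × Fin (N + 1))
      ∈ insert (a₂, Fin.last N) (C₂.map (ι M N)) := by
    rw [← h]; exact Finset.mem_insert_self _ _
  rcases Finset.mem_insert.mp hmem with hc | hc
  · have ha : a₁ = a₂ := (Prod.ext_iff.mp hc).1
    subst ha
    refine ⟨rfl, ?_⟩
    apply Finset.map_injective (ι M N)
    rw [← Finset.erase_insert (hne1 a₁), ← Finset.erase_insert (hne2 a₁), h]
  · exact absurd hc (hne2 _)

lemma map_mem_Pl {k : ℕ}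
    {C₀ : Finset (Fin M × Fin N)} (hC₀ : C₀ ∈ Pl M N (fun i => c i.castSucc) k) :
    C₀.map (ι M N) ∈ Pl M (N + 1) c k := by
  obtain ⟨hcard, hsub, hNA⟩ := mem_Pl.mp hC₀
  refine mem_Pl.mpr ⟨by rw [Finset.card_map, hcard], ?_, NA_map hNA⟩
  rw [Board_succ]
  exact (Finset.map_subset_map.mpr hsub).trans Finset.subset_union_left

lemma insert_mem_Pl {k : ℕ}
    {C₀ : Finset (Fin M × Fin N)} (hC₀ : C₀ ∈ Pl M N (fun i => c i.castSucc) k)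
    (r₀ : Fin M) (h1 : (r₀ : ℕ) < c (Fin.last N)) (h2 : (r₀ : ℕ) ∉ nrows C₀) :
    insert (r₀, Fin.last N) (C₀.map (ι M N)) ∈ Pl M (N + 1) c (k + 1) := by
  obtain ⟨hcard, hsub, hNA⟩ := mem_Pl.mp hC₀
  have hnm : ((r₀, Fin.last N) : Fin M × Fin (N + 1)) ∉ C₀.map (ι M N) :=
    fun hmm => snd_ne_last_of_mem_map hmm rfl
  refine mem_Pl.mpr ⟨?_, ?_, ?_⟩
  · rw [Finset.card_insert_of_notMem hnm, Finset.card_map, hcard]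
  · rw [Finset.insert_subset_iff]
    refine ⟨mem_Board.mpr h1, ?_⟩
    rw [Board_succ]
    exact (Finset.map_subset_map.mpr hsub).trans Finset.subset_union_left
  · intro r hr r' hr' hne
    rcases Finset.mem_insert.mp hr with rfl | hr
    · rcases Finset.mem_insert.mp hr' with rfl | hr'
      · exact absurd rfl hne
      · obtain ⟨a, ha, rfl⟩ := mem_map_ι.mp hr'
        refine ⟨fun hc => h2 (mem_nrows.mpr ⟨a, ha, by rw [← hc]⟩), ?_⟩
        exact fun hc => (Fin.ne_of_lt (Fin.castSucc_lt_last a.2)) hc.symm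
    · rcases Finset.mem_insert.mp hr' with rfl | hr'
      · obtain ⟨a, ha, rfl⟩ := mem_map_ι.mp hr
        refine ⟨fun hc => h2 (mem_nrows.mpr ⟨a, ha, by rw [hc]⟩), ?_⟩
        exact Fin.ne_of_lt (Fin.castSucc_lt_last a.2)
      · exact NA_map hNA r hr r' hr' hne

lemma exists_map_of_no_last {k : ℕ} {C : Finset (Fin M × Fin (N + 1))}
    (hC : C ∈ Pl M (N + 1) c k) (hno : ∀ s ∈ C, s.2 ≠ Fin.last N) :
    ∃ C₀ ∈ Pl M N (fun i => c i.castSucc) k, C = C₀.map (ι M N) := by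
  obtain ⟨hcard, hsub, hNA⟩ := mem_Pl.mp hC
  have hsub' : C ⊆ (Board M N (fun i => c i.castSucc)).map (ι M N) := by
    intro s hs
    have hb := hsub hs
    rw [Board_succ] at hb
    rcases Finset.mem_union.mp hb with hb | hb
    · exact hb
    · exact absurd (mem_lastCol.mp hb).2 (hno s hs)
  obtain ⟨u, hu, rfl⟩ := Finset.subset_map_iff.mp hsub'
  exact ⟨u, mem_Pl.mpr ⟨(Finset.card_map _).symm.trans hcard, hu, NA_of_map hNA⟩, rfl⟩

lemma card_lastCol {m : ℕ} (hm : m ≤ M) : (lastCol M N m).card = m := by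
  unfold lastCol
  rw [Finset.card_map, card_filter_val (fun t => t < m)]
  have : (range M).filter (fun t => t < m) = range m := by
    ext t
    simp only [Finset.mem_filter, mem_range]
    omega
  rw [this, card_range]

lemma Board_succ_card (hM : ∀ j, c j ≤ M) :
    (Board M (N + 1) c).card
      = (Board M N (fun i => c i.castSucc)).card + c (Fin.last N) := by
  rw [Board_succ, Finset.card_union_of_disjoint (disjoint_map_lastCol _ _),
    Finset.card_map, card_lastCol (hM _)]

lemma Rk_zero_succ (q : ℚ) (hM : ∀ j, c j ≤ M) :
    Rk q M (N + 1) c 0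
      = q ^ (c (Fin.last N)) * Rk q M N (fun i => c i.castSucc) 0 := by
  rw [Rk_zero, Rk_zero, Board_succ_card hM, pow_add, mul_comm]

lemma Rk_succ (q : ℚ) (hq0 : q ≠ 0) (hq1 : q ≠ 1)
    (hmono : Monotone c) (hM : ∀ j, c j ≤ M) (k : ℕ) :
    Rk q M (N + 1) c (k + 1)
      = q ^ ((c (Fin.last N) : ℤ) - (k + 1)) * Rk q M N (fun i => c i.castSucc) (k + 1)
        + qbrk q ((c (Fin.last N) : ℤ) - k) * Rk q M N (fun i => c i.castSucc) k := by
  classical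
  have hc'm : ∀ i : Fin N, (fun i : Fin N => c i.castSucc) i ≤ c (Fin.last N) :=
    fun i => hmono (Fin.le_last _)
  unfold Rk
  rw [← Finset.sum_filter_add_sum_filter_not (Pl M (N + 1) c (k + 1))
    (fun C => ∀ s ∈ C, s.2 ≠ Fin.last N)]
  congr 1
  · -- no rook in the last column
    have hbij : ∑ C ∈ (Pl M (N + 1) c (k + 1)).filter (fun C => ∀ s ∈ C, s.2 ≠ Fin.last N),
          q ^ Inv M (N + 1) c C
        = ∑ C₀ ∈ Pl M N (fun i => c i.castSucc) (k + 1),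
            q ^ (Inv M N (fun i => c i.castSucc) C₀ + (c (Fin.last N) - (k + 1))) := by
      refine (Finset.sum_bij (fun C₀ _ => C₀.map (ι M N)) ?_ ?_ ?_ ?_).symm
      · intro C₀ hC₀
        rw [Finset.mem_filter]
        exact ⟨map_mem_Pl hC₀, fun s hs => snd_ne_last_of_mem_map hs⟩
      · intro a _ b _ hab
        exact Finset.map_injective _ hab
      · intro C hC
        rw [Finset.mem_filter] at hC
        obtain ⟨C₀, h₀, rfl⟩ := exists_map_of_no_last hC.1 hC.2
        exact ⟨C₀, h₀, rfl⟩
      · intro C₀ hC₀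
        rw [Inv_map hmono hM hC₀]
    rw [hbij, Finset.mul_sum]
    apply Finset.sum_congr rfl
    intro C₀ hC₀
    have hk : k + 1 ≤ c (Fin.last N) := card_le_height hc'm hC₀
    rw [pow_add, ← zpow_natCast q (c (Fin.last N) - (k + 1)), mul_comm]
    congr 2
    rw [Nat.cast_sub hk]
    push_cast
    ring
  · -- a rook in the last column
    have hbij : ∑ C ∈ (Pl M (N + 1) c (k + 1)).filter (fun C => ¬ ∀ s ∈ C, s.2 ≠ Fin.last N),
          q ^ Inv M (N + 1) c C
        = ∑ p ∈ (Pl M N (fun i => c i.castSucc) k).sigma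
              (fun C₀ => range (c (Fin.last N)) \ nrows C₀),
            q ^ (Inv M N (fun i => c i.castSucc) p.1
              + ((range (c (Fin.last N)) \ nrows p.1).filter fun t => p.2 < t).card) := by
      refine (Finset.sum_bij (fun p hp => insert
        ((⟨p.2, lt_of_lt_of_le (mem_range.mp (Finset.mem_sdiff.mp
            (Finset.mem_sigma.mp hp).2).1) (hM (Fin.last N))⟩ : Fin M), Fin.last N)
        (p.1.map (ι M N))) ?_ ?_ ?_ ?_).symm
      · intro p hp
        obtain ⟨hp1, hp2⟩ := Finset.mem_sigma.mp hp
        obtain ⟨hpr, hpn⟩ := Finset.mem_sdiff.mp hp2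
        rw [Finset.mem_filter]
        refine ⟨insert_mem_Pl hp1 _ (mem_range.mp hpr) hpn, ?_⟩
        intro hall
        exact hall _ (Finset.mem_insert_self _ _) rfl
      · intro p₁ hp₁ p₂ hp₂ heq
        obtain ⟨C₁, t₁⟩ := p₁
        obtain ⟨C₂, t₂⟩ := p₂
        simp only at heq
        obtain ⟨ha, hC⟩ := insert_last_inj heq
        have ht : t₁ = t₂ := congrArg Fin.val ha
        subst ht
        subst hC
        rfl
      · intro C hC
        rw [Finset.mem_filter] at hC
        obtain ⟨hCPl, hnall⟩ := hC
        push_neg at hnall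
        obtain ⟨s₀, hs₀C, hs₀⟩ := hnall
        obtain ⟨hcard, hsub, hNA⟩ := mem_Pl.mp hCPl
        have hs₀eq : s₀ = (s₀.1, Fin.last N) := Prod.ext rfl hs₀
        have herase : C.erase s₀ ∈ Pl M (N + 1) c k := by
          refine mem_Pl.mpr ⟨?_, (Finset.erase_subset _ _).trans hsub, hNA.subset (Finset.erase_subset _ _)⟩
          rw [Finset.card_erase_of_mem hs₀C, hcard]
          omega
        have hnol : ∀ s ∈ C.erase s₀, s.2 ≠ Fin.last N := by
          intro s hs hc
          have hsC := Finset.mem_of_mem_erase hs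
          have hne := Finset.ne_of_mem_erase hs
          exact (hNA s hsC s₀ hs₀C hne).2 (by rw [hc, hs₀])
        obtain ⟨C₀, hC₀, hCeq⟩ := exists_map_of_no_last herase hnol
        have hr1 : (s₀.1 : ℕ) < c (Fin.last N) := by
          have := mem_Board.mp (hsub hs₀C)
          rwa [hs₀] at this
        have hr2 : (s₀.1 : ℕ) ∉ nrows C₀ := by
          intro hmem
          obtain ⟨a, ha, hav⟩ := mem_nrows.mp hmem
          have haC : ι M N a ∈ C.erase s₀ := by
            rw [hCeq]; exact Finset.mem_map_of_mem _ ha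
          have hne : ι M N a ≠ s₀ := by
            intro hc
            have := congrArg Prod.snd hc
            simp only [ι_apply] at this
            exact (Fin.ne_of_lt (Fin.castSucc_lt_last a.2)) (this.trans hs₀)
          have := (hNA _ (Finset.mem_of_mem_erase haC) s₀ hs₀C hne).1
          exact this (Fin.val_injective hav)
        refine ⟨⟨C₀, (s₀.1 : ℕ)⟩, Finset.mem_sigma.mpr ⟨hC₀,
          Finset.mem_sdiff.mpr ⟨mem_range.mpr hr1, hr2⟩⟩, ?_⟩
        simp only
        rw [← hCeq]
        have hfin : ∀ h : (s₀.1 : ℕ) < M,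
            ((⟨(s₀.1 : ℕ), h⟩ : Fin M), Fin.last N) = s₀ := by
          intro h
          exact Prod.ext (Fin.ext rfl) hs₀.symm
        rw [hfin, Finset.insert_erase hs₀C]
      · intro p hp
        obtain ⟨hp1, hp2⟩ := Finset.mem_sigma.mp hp
        obtain ⟨hpr, hpn⟩ := Finset.mem_sdiff.mp hp2
        rw [Inv_insert hmono hM hp1 _ (mem_range.mp hpr) hpn]
    rw [hbij, Finset.sum_sigma, Finset.mul_sum]
    apply Finset.sum_congr rfl
    intro C₀ hC₀
    obtain ⟨hcard, hsub, hNA⟩ := mem_Pl.mp hC₀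
    have hk : k ≤ c (Fin.last N) := card_le_height hc'm hC₀
    have hTcard : (range (c (Fin.last N)) \ nrows C₀).card = c (Fin.last N) - k := by
      rw [Finset.card_sdiff_of_subset (nrows_subset_range hc'm hsub), card_range,
        card_nrows hNA, hcard]
    calc ∑ t ∈ range (c (Fin.last N)) \ nrows C₀,
          q ^ (Inv M N (fun i => c i.castSucc) C₀
            + ((range (c (Fin.last N)) \ nrows C₀).filter fun u => t < u).card)
        = q ^ Inv M N (fun i => c i.castSucc) C₀
            * ∑ t ∈ range (c (Fin.last N)) \ nrows C₀,
              q ^ ((range (c (Fin.last N)) \ nrows C₀).filter fun u => t < u).card := by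
          rw [Finset.mul_sum]
          exact Finset.sum_congr rfl fun t _ => pow_add q _ _
      _ = q ^ Inv M N (fun i => c i.castSucc) C₀ * qbrk q ((c (Fin.last N) : ℤ) - k) := by
          rw [sum_pow_gt, hTcard, qint_eq_qbrk hq1, Nat.cast_sub hk]
      _ = qbrk q ((c (Fin.last N) : ℤ) - k) * q ^ Inv M N (fun i => c i.castSucc) C₀ :=
          mul_comm _ _

end Rec2
end GR

namespace GR

theorem main (q : ℚ) (hq0 : q ≠ 0) (hq1 : q ≠ 1) (M : ℕ) (x : ℕ) :
    ∀ (N : ℕ) (c : Fin N → ℕ), Monotone c → (∀ j, c j ≤ M) →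
      ∑ k ∈ range (N + 1), (∏ j ∈ range k, qbrk q ((x : ℤ) - j)) * Rk q M N c (N - k)
        = ∏ i : Fin N, qbrk q ((x : ℤ) + c i - i) := by
  intro N
  induction N with
  | zero =>
    intro c _ _
    simp [Rk_zero, Board, Finset.univ_eq_empty]
  | succ N IH =>
    intro c hmono hM
    have hmono' : Monotone (fun i : Fin N => c i.castSucc) :=
      fun i j hij => hmono (Fin.castSucc_le_castSucc_iff.mpr hij)
    have hM' : ∀ j : Fin N, (fun i : Fin N => c i.castSucc) j ≤ M := fun j => hM _
    have IH' := IH (fun i => c i.castSucc) hmono' hM'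
    rw [Fin.prod_univ_castSucc]
    simp only [Fin.coe_castSucc, Fin.val_last]
    rw [← IH']
    -- now prove: LHS = (∑ ...) * qbrk q (x + c last - N)
    have hz : Rk q M N (fun i : Fin N => c i.castSucc) (N - 0 + 1) = 0 :=
      Rk_eq_zero_of_gt (by omega)
    calc ∑ k ∈ range (N + 2), (∏ j ∈ range k, qbrk q ((x : ℤ) - j))
            * Rk q M (N + 1) c (N + 1 - k)
        = ∑ k ∈ range (N + 1), (∏ j ∈ range k, qbrk q ((x : ℤ) - j)) *
              (q ^ ((c (Fin.last N) : ℤ) - ((N - k : ℕ) + 1))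
                  * Rk q M N (fun i => c i.castSucc) (N - k + 1)
                + qbrk q ((c (Fin.last N) : ℤ) - (N - k : ℕ))
                  * Rk q M N (fun i => c i.castSucc) (N - k))
          + (∏ j ∈ range (N + 1), qbrk q ((x : ℤ) - j))
              * (q ^ ((c (Fin.last N) : ℤ)) * Rk q M N (fun i => c i.castSucc) 0) := by
          rw [Finset.sum_range_succ]
          congr 1
          · apply Finset.sum_congr rfl
            intro k hk
            have h1 : N + 1 - k = (N - k) + 1 := by
              have := mem_range.mp hk; omega
            rw [h1, Rk_succ q hq0 hq1 hmono hM (N - k)]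
          · rw [Nat.sub_self, Rk_zero_succ q hM, ← zpow_natCast q (c (Fin.last N))]
      _ = (∑ k ∈ range (N + 1), (∏ j ∈ range k, qbrk q ((x : ℤ) - j)) *
              (q ^ ((c (Fin.last N) : ℤ) - ((N - k : ℕ) + 1))
                  * Rk q M N (fun i => c i.castSucc) (N - k + 1))
          + (∏ j ∈ range (N + 1), qbrk q ((x : ℤ) - j))
              * (q ^ ((c (Fin.last N) : ℤ)) * Rk q M N (fun i => c i.castSucc) 0))
          + ∑ k ∈ range (N + 1), (∏ j ∈ range k, qbrk q ((x : ℤ) - j)) *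
              (qbrk q ((c (Fin.last N) : ℤ) - (N - k : ℕ))
                  * Rk q M N (fun i => c i.castSucc) (N - k)) := by
          simp only [mul_add]
          rw [Finset.sum_add_distrib]
          ring
      _ = ∑ k ∈ range (N + 1), (∏ j ∈ range (k + 1), qbrk q ((x : ℤ) - j)) *
              (q ^ ((c (Fin.last N) : ℤ) - (N - k : ℕ))
                  * Rk q M N (fun i => c i.castSucc) (N - k))
          + ∑ k ∈ range (N + 1), (∏ j ∈ range k, qbrk q ((x : ℤ) - j)) *
              (qbrk q ((c (Fin.last N) : ℤ) - (N - k : ℕ))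
                  * Rk q M N (fun i => c i.castSucc) (N - k)) := by
          congr 1
          rw [Finset.sum_range_succ' (fun k => (∏ j ∈ range k, qbrk q ((x : ℤ) - j)) *
              (q ^ ((c (Fin.last N) : ℤ) - ((N - k : ℕ) + 1))
                  * Rk q M N (fun i => c i.castSucc) (N - k + 1))) N]
          rw [Finset.sum_range_succ (fun k => (∏ j ∈ range (k + 1), qbrk q ((x : ℤ) - j)) *
              (q ^ ((c (Fin.last N) : ℤ) - (N - k : ℕ))
                  * Rk q M N (fun i => c i.castSucc) (N - k)))]
          simp only [hz, mul_zero, zero_mul, add_zero]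
          congr 1
          · apply Finset.sum_congr rfl
            intro i hi
            have hiN : i < N := mem_range.mp hi
            have e1 : N - (i + 1) + 1 = N - i := by omega
            have e2 : ((N - (i + 1) : ℕ) : ℤ) + 1 = ((N - i : ℕ) : ℤ) := by omega
            rw [e1, e2]
          · rw [Nat.sub_self]
            norm_num
      _ = ∑ k ∈ range (N + 1), (∏ j ∈ range k, qbrk q ((x : ℤ) - j)) *
              (qbrk q ((x : ℤ) + (c (Fin.last N) : ℤ) - (N : ℤ))
                  * Rk q M N (fun i => c i.castSucc) (N - k)) := by
          rw [← Finset.sum_add_distrib]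
          apply Finset.sum_congr rfl
          intro k hk
          have hkN : k ≤ N := Nat.lt_succ_iff.mp (mem_range.mp hk)
          rw [Finset.prod_range_succ]
          have harith : ((x : ℤ) - k) + ((c (Fin.last N) : ℤ) - (N - k : ℕ)) =
              (x : ℤ) + (c (Fin.last N) : ℤ) - (N : ℤ) := by omega
          calc (∏ j ∈ range k, qbrk q ((x : ℤ) - j)) * qbrk q ((x : ℤ) - k) *
                  (q ^ ((c (Fin.last N) : ℤ) - (N - k : ℕ))
                    * Rk q M N (fun i => c i.castSucc) (N - k))
              + (∏ j ∈ range k, qbrk q ((x : ℤ) - j)) *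
                  (qbrk q ((c (Fin.last N) : ℤ) - (N - k : ℕ))
                    * Rk q M N (fun i => c i.castSucc) (N - k))
              = (∏ j ∈ range k, qbrk q ((x : ℤ) - j)) *
                  ((qbrk q ((x : ℤ) - k) * q ^ ((c (Fin.last N) : ℤ) - (N - k : ℕ))
                    + qbrk q ((c (Fin.last N) : ℤ) - (N - k : ℕ)))
                    * Rk q M N (fun i => c i.castSucc) (N - k)) := by ring
            _ = _ := by
                rw [qbrk_mul_add hq0 hq1, harith]
      _ = (∑ k ∈ range (N + 1), (∏ j ∈ range k, qbrk q ((x : ℤ) - j)) *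
              Rk q M N (fun i => c i.castSucc) (N - k))
            * qbrk q ((x : ℤ) + (c (Fin.last N) : ℤ) - (N : ℤ)) := by
          rw [Finset.sum_mul]
          apply Finset.sum_congr rfl
          intro k _
          ring
      _ = (∑ k ∈ range (N + 1), (∏ j ∈ range k, qbrk q ((x : ℤ) - j)) *
              Rk q M N (fun i => c i.castSucc) (N - k))
            * qbrk q ((x : ℤ) + (c (Fin.last N) : ℕ) - (N : ℕ)) := by norm_num

end GR

theorem statement2 (q : ℚ) (hq0 : q ≠ 0) (hq1 : q ≠ 1) (n : ℕ) (c : Fin n → ℕ)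
    (hc : IsFerrers n c) (x : ℕ) :
    ∑ k ∈ Finset.range (n + 1),
        (∏ j ∈ Finset.range k, qbrk q ((x : ℤ) - j)) * qRook q n c (n - k) =
      ∏ i : Fin n, qbrk q ((x : ℤ) + c i - i) := by
  have h := GR.main q hq0 hq1 n x n c hc.1 hc.2
  have hconv : ∀ k, qRook q n c k = GR.Rk q n n c k := fun _ => rfl
  simp only [hconv]
  exact h
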